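/- arXiv:2010.10992 — 2 statements merged into one kernel-verified Lean document; each statement's English description precedes it below -/
import Mathlib

section
/- Let X ~ Beta(a,b). If 1 < b < a, then median(X) ≤ (a−1)/(a+b−2); if 1 < a < b, then median(X) ≤ a/(a+b); if a = b > 1, then median(X) = 1/2. -/
open MeasureTheory intervalIntegral Real Set

noncomputable def betaF (a b x : ℝ) : ℝ := x ^ (a-1) * (1-x) ^ (b-1)

section aux
variable {a b : ℝ}

lemma betaF_cont (ha : 1 < a) (hb : 1 < b) : Continuous (betaF a b) := by
  apply Continuous.mul
  · exact Real.continuous_rpow_const (by linarith)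
  · exact (Real.continuous_rpow_const (by linarith)).comp (continuous_const.sub continuous_id)

lemma betaF_nonneg {x : ℝ} (hx0 : 0 ≤ x) (hx1 : x ≤ 1) : 0 ≤ betaF a b x :=
  mul_nonneg (Real.rpow_nonneg hx0 _) (Real.rpow_nonneg (by linarith) _)

lemma betaF_pos {x : ℝ} (hx0 : 0 < x) (hx1 : x < 1) : 0 < betaF a b x :=
  mul_pos (Real.rpow_pos_of_pos hx0 _) (Real.rpow_pos_of_pos (by linarith) _)

lemma betaF_zero (ha : 1 < a) : betaF a b 0 = 0 := by
  simp [betaF, Real.zero_rpow (by linarith : a - 1 ≠ 0)]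

lemma betaF_one (hb : 1 < b) : betaF a b 1 = 0 := by
  simp [betaF, Real.zero_rpow (by linarith : b - 1 ≠ 0)]

lemma betaF_intble (ha : 1 < a) (hb : 1 < b) (c d : ℝ) :
    IntervalIntegrable (betaF a b) MeasureTheory.volume c d :=
  (betaF_cont ha hb).intervalIntegrable c d

lemma intF_pos (ha : 1 < a) (hb : 1 < b) {c d : ℝ} (h0 : 0 ≤ c) (hcd : c < d) (h1 : d ≤ 1) :
    0 < ∫ x in c..d, betaF a b x :=
  intervalIntegral_pos_of_pos_on (betaF_intble ha hb c d)
    (fun x hx => betaF_pos (lt_of_le_of_lt h0 hx.1) (lt_of_lt_of_le hx.2 h1)) hcd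

/-- if the integral up to c is at least half the total, the median is ≤ c. -/
lemma median_le (ha : 1 < a) (hb : 1 < b) {m c : ℝ} (hm1 : m ≤ 1) (hc0 : 0 ≤ c)
    (hmed : ∫ x in (0:ℝ)..m, betaF a b x = (1/2) * ∫ x in (0:ℝ)..1, betaF a b x)
    (hc : (1/2) * (∫ x in (0:ℝ)..1, betaF a b x) ≤ ∫ x in (0:ℝ)..c, betaF a b x) : m ≤ c := by
  by_contra h
  push_neg at h
  have hsplit : (∫ x in (0:ℝ)..c, betaF a b x) + ∫ x in c..m, betaF a b x
      = ∫ x in (0:ℝ)..m, betaF a b x :=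
    integral_add_adjacent_intervals (betaF_intble ha hb 0 c) (betaF_intble ha hb c m)
  have hpos : 0 < ∫ x in c..m, betaF a b x := intF_pos ha hb hc0 h hm1
  linarith [hmed ▸ hsplit]

lemma median_ge (ha : 1 < a) (hb : 1 < b) {m c : ℝ} (hm0 : 0 ≤ m) (hc1 : c ≤ 1)
    (hmed : ∫ x in (0:ℝ)..m, betaF a b x = (1/2) * ∫ x in (0:ℝ)..1, betaF a b x)
    (hc : (∫ x in (0:ℝ)..c, betaF a b x) ≤ (1/2) * ∫ x in (0:ℝ)..1, betaF a b x) : c ≤ m := by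
  by_contra h
  push_neg at h
  have hsplit : (∫ x in (0:ℝ)..m, betaF a b x) + ∫ x in m..c, betaF a b x
      = ∫ x in (0:ℝ)..c, betaF a b x :=
    integral_add_adjacent_intervals (betaF_intble ha hb 0 m) (betaF_intble ha hb m c)
  have hpos : 0 < ∫ x in m..c, betaF a b x := intF_pos ha hb hm0 h hc1
  linarith [hmed ▸ hsplit]

/-- case a = b : total symmetry -/
lemma half_symm (ha : 1 < a) :
    ∫ x in (0:ℝ)..(1/2), betaF a a x = (1/2) * ∫ x in (0:ℝ)..1, betaF a a x := by
  have hrefl : ∫ t in (0:ℝ)..(1/2), betaF a a (1 - t) = ∫ x in (1/2:ℝ)..1, betaF a a x := by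
    rw [intervalIntegral.integral_comp_sub_left (betaF a a) 1]
    norm_num
  have hcongr : ∫ t in (0:ℝ)..(1/2), betaF a a (1 - t) = ∫ t in (0:ℝ)..(1/2), betaF a a t := by
    apply intervalIntegral.integral_congr
    intro t _
    show betaF a a (1 - t) = betaF a a t
    unfold betaF
    rw [show (1 : ℝ) - (1 - t) = t by ring, mul_comm]
  have hsplit : (∫ x in (0:ℝ)..(1/2), betaF a a x) + ∫ x in (1/2:ℝ)..1, betaF a a x
      = ∫ x in (0:ℝ)..1, betaF a a x :=
    integral_add_adjacent_intervals (betaF_intble ha ha 0 (1/2)) (betaF_intble ha ha (1/2) 1)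
  linarith [hrefl, hcongr, hsplit]

lemma betaF_eq_exp {x : ℝ} (h0 : 0 < x) (h1 : x < 1) :
    betaF a b x = Real.exp ((a-1) * Real.log x + (b-1) * Real.log (1-x)) := by
  rw [betaF, Real.rpow_def_of_pos h0, Real.rpow_def_of_pos (by linarith), ← Real.exp_add]
  ring_nf

lemma betaF_le_betaF {x y : ℝ} (hx0 : 0 < x) (hx1 : x < 1) (hy0 : 0 < y) (hy1 : y < 1)
    (h : (a-1) * Real.log x + (b-1) * Real.log (1-x)
        ≤ (a-1) * Real.log y + (b-1) * Real.log (1-y)) :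
    betaF a b x ≤ betaF a b y := by
  rw [betaF_eq_exp hx0 hx1, betaF_eq_exp hy0 hy1]
  exact Real.exp_le_exp.mpr h

lemma betaF_lt_iff {x y : ℝ} (hx0 : 0 < x) (hx1 : x < 1) (hy0 : 0 < y) (hy1 : y < 1) :
    betaF a b x < betaF a b y ↔ (a-1) * Real.log x + (b-1) * Real.log (1-x)
        < (a-1) * Real.log y + (b-1) * Real.log (1-y) := by
  rw [betaF_eq_exp hx0 hx1, betaF_eq_exp hy0 hy1]
  exact Real.exp_lt_exp

/-- derivative fact for the log-difference function centered at c -/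
lemma logdiff_hasDeriv {c : ℝ} {s : ℝ} (h1 : 0 < c - s) (h2 : 0 < c + s)
    (h3 : 0 < 1 - c + s) (h4 : 0 < 1 - c - s) :
    HasDerivAt (fun s => ((a-1) * Real.log (c - s) + (b-1) * Real.log (1 - c + s))
        - ((a-1) * Real.log (c + s) + (b-1) * Real.log (1 - c - s)))
      (((a-1) * (-1/(c - s)) + (b-1) * (1/(1 - c + s)))
        - ((a-1) * (1/(c + s)) + (b-1) * (-1/(1 - c - s)))) s := by
  have d1 : HasDerivAt (fun s : ℝ => Real.log (c - s)) (-1/(c - s)) s := by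
    have : HasDerivAt (fun s : ℝ => c - s) (-1) s := (hasDerivAt_id s).const_sub c
    simpa [neg_div] using this.log (ne_of_gt h1)
  have d2 : HasDerivAt (fun s : ℝ => Real.log (c + s)) (1/(c + s)) s := by
    have : HasDerivAt (fun s : ℝ => c + s) 1 s := (hasDerivAt_id s).const_add c
    simpa using this.log (ne_of_gt h2)
  have d3 : HasDerivAt (fun s : ℝ => Real.log (1 - c + s)) (1/(1 - c + s)) s := by
    have : HasDerivAt (fun s : ℝ => 1 - c + s) 1 s := (hasDerivAt_id s).const_add (1 - c)
    simpa using this.log (ne_of_gt h3)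
  have d4 : HasDerivAt (fun s : ℝ => Real.log (1 - c - s)) (-1/(1 - c - s)) s := by
    have : HasDerivAt (fun s : ℝ => 1 - c - s) (-1) s := (hasDerivAt_id s).const_sub (1 - c)
    simpa [neg_div] using this.log (ne_of_gt h4)
  exact ((d1.const_mul (a-1)).add (d3.const_mul (b-1))).sub
    ((d2.const_mul (a-1)).add (d4.const_mul (b-1)))

/-- pointwise reflection inequality at the mode, case b < a -/
lemma refl_mode (ha : 1 < a) (hb : 1 < b) (hba : b < a) {t : ℝ} (ht0 : 0 ≤ t)
    (ht1 : t ≤ 1 - (a-1)/(a+b-2)) :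
    betaF a b ((a-1)/(a+b-2) + t) ≤ betaF a b ((a-1)/(a+b-2) - t) := by
  set M := (a-1)/(a+b-2) with hMdef
  have hS : (0:ℝ) < a + b - 2 := by linarith
  have hMa : a - 1 = M * (a + b - 2) := by rw [hMdef]; field_simp
  have hMb : b - 1 = (1 - M) * (a + b - 2) := by rw [hMdef]; field_simp; ring
  have hM2 : 1/2 < M := by rw [hMdef, lt_div_iff₀ hS]; linarith
  have hM1 : M < 1 := by rw [hMdef, div_lt_one hS]; linarith
  rcases eq_or_lt_of_le ht1 with h | h
  · have hMt : M + t = 1 := by rw [h]; ring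
    rw [hMt, betaF_one hb]
    exact betaF_nonneg (by linarith) (by linarith)
  · -- main case : t < 1 - M
    have hbounds : ∀ s ∈ Set.uIcc (0:ℝ) t,
        0 < M - s ∧ 0 < M + s ∧ 0 < 1 - M + s ∧ 0 < 1 - M - s := by
      intro s hs
      rw [Set.uIcc_of_le ht0] at hs
      obtain ⟨hs0, hs1⟩ := hs
      exact ⟨by linarith, by linarith, by linarith, by linarith⟩
    have hderiv : ∀ s ∈ Set.uIcc (0:ℝ) t,
        HasDerivAt (fun s => ((a-1) * Real.log (M - s) + (b-1) * Real.log (1 - M + s))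
          - ((a-1) * Real.log (M + s) + (b-1) * Real.log (1 - M - s)))
        ((((a-1) * (-1/(M - s)) + (b-1) * (1/(1 - M + s)))
          - ((a-1) * (1/(M + s)) + (b-1) * (-1/(1 - M - s))))) s := by
      intro s hs
      obtain ⟨h1, h2, h3, h4⟩ := hbounds s hs
      exact logdiff_hasDeriv h1 h2 h3 h4
    have hcont : ContinuousOn (fun s => (((a-1) * (-1/(M - s)) + (b-1) * (1/(1 - M + s)))
          - ((a-1) * (1/(M + s)) + (b-1) * (-1/(1 - M - s))))) (Set.uIcc (0:ℝ) t) := by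
      apply ContinuousOn.sub <;> apply ContinuousOn.add <;> apply ContinuousOn.mul <;>
        try exact continuousOn_const
      · exact ContinuousOn.div continuousOn_const (by fun_prop)
          (fun s hs => ne_of_gt (hbounds s hs).1)
      · exact ContinuousOn.div continuousOn_const (by fun_prop)
          (fun s hs => ne_of_gt (hbounds s hs).2.2.1)
      · exact ContinuousOn.div continuousOn_const (by fun_prop)
          (fun s hs => ne_of_gt (hbounds s hs).2.1)
      · exact ContinuousOn.div continuousOn_const (by fun_prop)
          (fun s hs => ne_of_gt (hbounds s hs).2.2.2)
    have key : (∫ s in (0:ℝ)..t, (((a-1) * (-1/(M - s)) + (b-1) * (1/(1 - M + s)))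
          - ((a-1) * (1/(M + s)) + (b-1) * (-1/(1 - M - s)))))
        = (((a-1) * Real.log (M - t) + (b-1) * Real.log (1 - M + t))
          - ((a-1) * Real.log (M + t) + (b-1) * Real.log (1 - M - t)))
        - (((a-1) * Real.log (M - 0) + (b-1) * Real.log (1 - M + 0))
          - ((a-1) * Real.log (M + 0) + (b-1) * Real.log (1 - M - 0))) :=
      intervalIntegral.integral_eq_sub_of_hasDerivAt hderiv (hcont.intervalIntegrable)
    have hG0 : (((a-1) * Real.log (M - 0) + (b-1) * Real.log (1 - M + 0))
          - ((a-1) * Real.log (M + 0) + (b-1) * Real.log (1 - M - 0))) = 0 := by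
      norm_num
    have hDnn : ∀ s ∈ Set.Icc (0:ℝ) t, 0 ≤ (((a-1) * (-1/(M - s)) + (b-1) * (1/(1 - M + s)))
          - ((a-1) * (1/(M + s)) + (b-1) * (-1/(1 - M - s)))) := by
      intro s hs
      obtain ⟨h1, h2, h3, h4⟩ := hbounds s (by rw [Set.uIcc_of_le ht0]; exact hs)
      have e1 : (a-1) * (-1/(M - s)) - (a-1) * (1/(M + s))
          = -((a-1) * (2*M) / ((M - s) * (M + s))) := by
        field_simp
        ring
      have e2 : (b-1) * (1/(1 - M + s)) + (b-1) * (1/(1 - M - s))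
          = (b-1) * (2*(1-M)) / ((1 - M + s) * (1 - M - s)) := by
        field_simp
        ring
      have keyineq : (a-1) * (2*M) / ((M - s) * (M + s))
          ≤ (b-1) * (2*(1-M)) / ((1 - M + s) * (1 - M - s)) := by
        rw [div_le_div_iff₀ (mul_pos h1 h2) (mul_pos h3 h4)]
        rw [hMa, hMb]
        nlinarith [mul_nonneg (mul_nonneg hS.le (sq_nonneg s))
          (show (0:ℝ) ≤ 2*M - 1 by linarith)]
      have e3 : (b-1) * (-1/(1 - M - s)) = -((b-1) * (1/(1 - M - s))) := by ring
      linarith [e1, e2, e3, keyineq]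
    have hnn : 0 ≤ ∫ s in (0:ℝ)..t, (((a-1) * (-1/(M - s)) + (b-1) * (1/(1 - M + s)))
          - ((a-1) * (1/(M + s)) + (b-1) * (-1/(1 - M - s)))) :=
      intervalIntegral.integral_nonneg ht0 hDnn
    have hG : 0 ≤ ((a-1) * Real.log (M - t) + (b-1) * Real.log (1 - M + t))
          - ((a-1) * Real.log (M + t) + (b-1) * Real.log (1 - M - t)) := by
      rw [key, hG0] at hnn
      linarith
    apply betaF_le_betaF (by linarith) (by linarith) (by linarith) (by linarith)
    have e1 : 1 - (M + t) = 1 - M - t := by ring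
    have e2 : 1 - (M - t) = 1 - M + t := by ring
    rw [e1, e2]
    linarith

/-- case 1 : half mass below the mode when b < a -/
lemma case1_half (ha : 1 < a) (hb : 1 < b) (hba : b < a) :
    (1/2) * (∫ x in (0:ℝ)..1, betaF a b x)
      ≤ ∫ x in (0:ℝ)..((a-1)/(a+b-2)), betaF a b x := by
  set M := (a-1)/(a+b-2) with hMdef
  have hS : (0:ℝ) < a + b - 2 := by linarith
  have hM2 : 1/2 < M := by rw [hMdef, lt_div_iff₀ hS]; linarith
  have hM1 : M < 1 := by rw [hMdef, div_lt_one hS]; linarith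
  have h1 : (∫ t in (0:ℝ)..(1-M), betaF a b (M + t)) = ∫ x in M..1, betaF a b x := by
    rw [intervalIntegral.integral_comp_add_left (betaF a b) M]
    norm_num
  have h2 : (∫ t in (0:ℝ)..(1-M), betaF a b (M - t))
      = ∫ x in (2*M-1)..M, betaF a b x := by
    rw [intervalIntegral.integral_comp_sub_left (betaF a b) M]
    congr 1 <;> ring
  have hmono : (∫ t in (0:ℝ)..(1-M), betaF a b (M + t))
      ≤ ∫ t in (0:ℝ)..(1-M), betaF a b (M - t) := by
    apply intervalIntegral.integral_mono_on (by linarith)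
    · exact ((betaF_cont ha hb).comp (continuous_const.add continuous_id)).intervalIntegrable _ _
    · exact ((betaF_cont ha hb).comp (continuous_const.sub continuous_id)).intervalIntegrable _ _
    · intro t ht
      exact refl_mode ha hb hba ht.1 ht.2
  have hsplit1 : (∫ x in (0:ℝ)..M, betaF a b x) + ∫ x in M..1, betaF a b x
      = ∫ x in (0:ℝ)..1, betaF a b x :=
    integral_add_adjacent_intervals (betaF_intble ha hb 0 M) (betaF_intble ha hb M 1)
  have hsplit2 : (∫ x in (0:ℝ)..(2*M-1), betaF a b x) + ∫ x in (2*M-1)..M, betaF a b x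
      = ∫ x in (0:ℝ)..M, betaF a b x :=
    integral_add_adjacent_intervals (betaF_intble ha hb 0 (2*M-1)) (betaF_intble ha hb (2*M-1) M)
  have hnn : 0 ≤ ∫ x in (0:ℝ)..(2*M-1), betaF a b x := by
    apply intervalIntegral.integral_nonneg (by linarith)
    intro x hx
    exact betaF_nonneg hx.1 (by rcases hx with ⟨_, h⟩; linarith)
  linarith [h1, h2, hmono, hsplit1, hsplit2, hnn]

/-- for a < b the density at x dominates the density at 1-x, for x ≤ 1/2 -/
lemma refl_half (ha : 1 < a) (hab : a < b) {x : ℝ} (hx0 : 0 ≤ x) (hx1 : x ≤ 1/2) :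
    betaF a b (1 - x) ≤ betaF a b x := by
  have hb : 1 < b := ha.trans hab
  rcases eq_or_lt_of_le hx0 with rfl | hx0'
  · rw [show (1:ℝ) - 0 = 1 by ring, betaF_one hb, betaF_zero ha]
  · have h1x : 0 < 1 - x := by linarith
    unfold betaF
    rw [show (1:ℝ) - (1 - x) = x by ring]
    have ebx : x ^ (b-1) = x ^ (a-1) * x ^ (b-a) := by
      rw [← Real.rpow_add hx0']
      congr 1
      ring
    have e1x : (1-x) ^ (b-1) = (1-x) ^ (a-1) * (1-x) ^ (b-a) := by
      rw [← Real.rpow_add h1x]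
      congr 1
      ring
    rw [ebx, e1x]
    have hle : x ^ (b-a) ≤ (1-x) ^ (b-a) :=
      Real.rpow_le_rpow hx0'.le (by linarith) (by linarith)
    calc (1-x) ^ (a-1) * (x ^ (a-1) * x ^ (b-a))
        = (x ^ (a-1) * (1-x) ^ (a-1)) * x ^ (b-a) := by ring
      _ ≤ (x ^ (a-1) * (1-x) ^ (a-1)) * (1-x) ^ (b-a) := by
          apply mul_le_mul_of_nonneg_left hle
          exact mul_nonneg (Real.rpow_nonneg hx0'.le _) (Real.rpow_nonneg h1x.le _)
      _ = x ^ (a-1) * ((1-x) ^ (a-1) * (1-x) ^ (b-a)) := by ring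

/-- for a < b the median is at most 1/2 -/
lemma med_le_half (ha : 1 < a) (hab : a < b) {m : ℝ} (hm1 : m ≤ 1)
    (hmed : ∫ x in (0:ℝ)..m, betaF a b x = (1/2) * ∫ x in (0:ℝ)..1, betaF a b x) :
    m ≤ 1/2 := by
  have hb : 1 < b := ha.trans hab
  apply median_le ha hb hm1 (by norm_num) hmed
  have h1 : ∫ t in (0:ℝ)..(1/2), betaF a b (1 - t) = ∫ x in (1/2:ℝ)..1, betaF a b x := by
    rw [intervalIntegral.integral_comp_sub_left (betaF a b) 1]
    norm_num
  have hmono : (∫ t in (0:ℝ)..(1/2), betaF a b (1 - t))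
      ≤ ∫ t in (0:ℝ)..(1/2), betaF a b t := by
    apply intervalIntegral.integral_mono_on (by norm_num)
    · exact ((betaF_cont ha hb).comp (continuous_const.sub continuous_id)).intervalIntegrable _ _
    · exact betaF_intble ha hb _ _
    · intro t ht
      exact refl_half ha hab ht.1 ht.2
  have hsplit : (∫ x in (0:ℝ)..(1/2), betaF a b x) + ∫ x in (1/2:ℝ)..1, betaF a b x
      = ∫ x in (0:ℝ)..1, betaF a b x :=
    integral_add_adjacent_intervals (betaF_intble ha hb 0 (1/2)) (betaF_intble ha hb (1/2) 1)
  linarith [h1, hmono, hsplit]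

/-- the partial first-moment identity -/
lemma moment_identity (ha : 1 < a) (hb : 1 < b) {c : ℝ} (hc0 : 0 ≤ c) (hc1 : c ≤ 1) :
    ∫ x in (0:ℝ)..c, betaF a b x * (a - (a+b)*x) = c ^ a * (1-c) ^ b := by
  have hderiv : ∀ x ∈ Set.uIcc (0:ℝ) c,
      HasDerivAt (fun x : ℝ => x ^ a * (1-x) ^ b) (betaF a b x * (a - (a+b)*x)) x := by
    intro x hx
    rw [Set.uIcc_of_le hc0] at hx
    obtain ⟨hx0, hx1'⟩ := hx
    have hx1 : x ≤ 1 := le_trans hx1' hc1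
    have d1 : HasDerivAt (fun x : ℝ => x ^ a) (a * x ^ (a-1)) x := by
      simpa using Real.hasDerivAt_rpow_const (x := x) (p := a) (Or.inr ha.le)
    have d2 : HasDerivAt (fun x : ℝ => (1-x) ^ b) ((-1) * b * (1-x) ^ (b-1)) x := by
      have inner : HasDerivAt (fun x : ℝ => 1 - x) (-1) x := (hasDerivAt_id x).const_sub 1
      exact inner.rpow_const (Or.inr hb.le)
    have prod := d1.mul d2
    refine prod.congr_deriv ?_
    unfold betaF
    rcases eq_or_lt_of_le hx0 with rfl | hx0'
    · rw [Real.zero_rpow (by linarith : a - 1 ≠ 0), Real.zero_rpow (by linarith : a ≠ 0)]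
      ring
    rcases eq_or_lt_of_le hx1 with rfl | hx1''
    · rw [show (1:ℝ) - 1 = 0 by ring, Real.zero_rpow (by linarith : b - 1 ≠ 0),
        Real.zero_rpow (by linarith : b ≠ 0)]
      ring
    · have ea : x ^ a = x ^ (a-1) * x := by
        have h := Real.rpow_add_one (ne_of_gt hx0') (a-1)
        rwa [show a - 1 + 1 = a by ring] at h
      have eb : (1-x) ^ b = (1-x) ^ (b-1) * (1-x) := by
        have h := Real.rpow_add_one (by linarith : (1:ℝ) - x ≠ 0) (b-1)
        rwa [show b - 1 + 1 = b by ring] at h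
      rw [ea, eb]
      ring
  have hcont : ContinuousOn (fun x => betaF a b x * (a - (a+b)*x)) (Set.uIcc (0:ℝ) c) :=
    ((betaF_cont ha hb).mul (by fun_prop)).continuousOn
  have := intervalIntegral.integral_eq_sub_of_hasDerivAt hderiv (hcont.intervalIntegrable)
  rw [this, Real.zero_rpow (by linarith : a ≠ 0)]
  norm_num

/-- derivative of the log-difference at center m -/
noncomputable def DgF (a b m s : ℝ) : ℝ :=
  ((a-1) * (-1/(m - s)) + (b-1) * (1/(1 - m + s)))
    - ((a-1) * (1/(m + s)) + (b-1) * (-1/(1 - m - s)))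

/-- the derivative of the log-difference cannot go from negative back to positive -/
lemma Dg_no_sign_return (ha : 1 < a) (hab : a < b) {m ξ₁ ξ₂ : ℝ} (hm2 : m ≤ 1/2)
    (h0 : 0 < ξ₁) (h12 : ξ₁ < ξ₂) (h2m : ξ₂ < m)
    (hD1 : DgF a b m ξ₁ < 0) (hD2 : 0 < DgF a b m ξ₂) : False := by
  have hbounds : ∀ ξ, 0 < ξ → ξ < m → 0 < m - ξ ∧ 0 < m + ξ ∧ 0 < 1 - m + ξ ∧ 0 < 1 - m - ξ :=
    fun ξ hh0 hh1 => ⟨by linarith, by linarith, by linarith, by linarith⟩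
  have hconv : ∀ ξ, 0 < ξ → ξ < m → DgF a b m ξ
      = (b-1)*(2*(1-m))/((1 - m + ξ)*(1 - m - ξ)) - (a-1)*(2*m)/((m - ξ)*(m + ξ)) := by
    intro ξ hh0 hh1
    obtain ⟨k1, k2, k3, k4⟩ := hbounds ξ hh0 hh1
    unfold DgF
    field_simp
    ring
  obtain ⟨k1, k2, k3, k4⟩ := hbounds ξ₁ h0 (lt_trans h12 h2m)
  obtain ⟨l1, l2, l3, l4⟩ := hbounds ξ₂ (lt_trans h0 h12) h2m
  rw [hconv ξ₁ h0 (lt_trans h12 h2m)] at hD1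
  rw [hconv ξ₂ (lt_trans h0 h12) h2m] at hD2
  have hP1 : (b-1)*(2*(1-m))*((m - ξ₁)*(m + ξ₁)) < (a-1)*(2*m)*((1 - m + ξ₁)*(1 - m - ξ₁)) := by
    rw [← div_lt_div_iff₀ (mul_pos k3 k4) (mul_pos k1 k2)]
    linarith
  have hP2 : (a-1)*(2*m)*((1 - m + ξ₂)*(1 - m - ξ₂)) < (b-1)*(2*(1-m))*((m - ξ₂)*(m + ξ₂)) := by
    rw [← div_lt_div_iff₀ (mul_pos l1 l2) (mul_pos l3 l4)]
    linarith
  have hAB : (a-1)*m < (b-1)*(1-m) := by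
    have h1 : (a-1)*m ≤ (a-1)*(1-m) := mul_le_mul_of_nonneg_left (by linarith) (by linarith)
    have h2 : (a-1)*(1-m) < (b-1)*(1-m) := by
      apply mul_lt_mul_of_pos_right (by linarith)
      linarith
    linarith
  have hsq : ξ₁^2 < ξ₂^2 := by nlinarith
  nlinarith [mul_pos (show (0:ℝ) < ξ₂^2 - ξ₁^2 by linarith)
    (show (0:ℝ) < (b-1)*(1-m) - (a-1)*m by linarith)]

/-- single sign change of the reflected density difference around the median -/
lemma single_crossing (ha : 1 < a) (hab : a < b) {m : ℝ} (hm0 : 0 < m) (hm2 : m ≤ 1/2) :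
    ∃ c ∈ Set.Icc (0:ℝ) m, ∀ t ∈ Set.Icc (0:ℝ) m,
      (t - c) * (betaF a b (m - t) - betaF a b (m + t)) ≤ 0 := by
  have hb : 1 < b := ha.trans hab
  set ψ : ℝ → ℝ := fun t => betaF a b (m - t) - betaF a b (m + t) with hψdef
  have hψcont : Continuous ψ :=
    ((betaF_cont ha hb).comp (continuous_const.sub continuous_id)).sub
      ((betaF_cont ha hb).comp (continuous_const.add continuous_id))
  have hψ0 : ψ 0 = 0 := by simp [hψdef]
  set S : Set ℝ := {t | t ∈ Set.Icc 0 m ∧ ∀ s ∈ Set.Icc 0 t, 0 ≤ ψ s} with hSdef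
  have hS0 : (0:ℝ) ∈ S := by
    refine ⟨⟨le_refl 0, hm0.le⟩, fun s hs => ?_⟩
    have hs0 : s = 0 := le_antisymm hs.2 hs.1
    rw [hs0, hψ0]
  have hbdd : BddAbove S := ⟨m, fun t ht => ht.1.2⟩
  set c := sSup S with hcdef
  have hc0 : 0 ≤ c := le_csSup hbdd hS0
  have hcm : c ≤ m := csSup_le ⟨0, hS0⟩ (fun t ht => ht.1.2)
  -- part (i) : ψ is nonnegative on [0, c]
  have hpos : ∀ t, 0 ≤ t → t ≤ c → 0 ≤ ψ t := by
    intro t ht0 htc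
    by_contra hneg
    push_neg at hneg
    have hev : ∀ᶠ u in nhds t, ψ u < 0 :=
      (hψcont.continuousAt (x := t)).eventually_lt_const hneg
    obtain ⟨ε, hε, hball⟩ := Metric.eventually_nhds_iff.mp hev
    have hub : ∀ s ∈ S, s ≤ t - ε/2 := by
      intro s hs
      by_contra hgt
      push_neg at hgt
      rcases le_or_gt t s with hts | hst
      · exact absurd (hs.2 t ⟨ht0, hts⟩) (not_le.mpr hneg)
      · have hd : dist s t < ε := by
          rw [Real.dist_eq, abs_lt]
          constructor <;> linarith
        exact absurd (hs.2 s ⟨hs.1.1, le_refl s⟩) (not_le.mpr (hball hd))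
    have : c ≤ t - ε/2 := csSup_le ⟨0, hS0⟩ hub
    linarith
  -- part (ii) : ψ is nonpositive on (c, m]
  have hneg2 : ∀ t, c < t → t ≤ m → ψ t ≤ 0 := by
    intro t hct htm
    by_contra hpos'
    push_neg at hpos'
    have ht0 : 0 < t := lt_of_le_of_lt hc0 hct
    have hψm : ψ m ≤ 0 := by
      show betaF a b (m - m) - betaF a b (m + m) ≤ 0
      rw [sub_self m, betaF_zero ha]
      have := betaF_nonneg (a := a) (b := b) (x := m + m) (by linarith) (by linarith)
      linarith
    have htm' : t < m := lt_of_le_of_ne htm (by rintro rfl; linarith)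
    have hex : ∃ s ∈ Set.Icc (0:ℝ) t, ψ s < 0 := by
      by_contra hno
      push_neg at hno
      have : t ∈ S := ⟨⟨ht0.le, htm⟩, hno⟩
      exact absurd (le_csSup hbdd this) (not_le.mpr hct)
    obtain ⟨s₂, hs₂mem, hs₂⟩ := hex
    have hs₂0 : 0 < s₂ := by
      rcases eq_or_lt_of_le hs₂mem.1 with h | h
      · rw [← h, hψ0] at hs₂; linarith
      · exact h
    have hs₂t : s₂ < t := by
      rcases eq_or_lt_of_le hs₂mem.2 with h | h
      · rw [h] at hs₂; linarith
      · exact h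
    set g : ℝ → ℝ := fun s => ((a-1) * Real.log (m - s) + (b-1) * Real.log (1 - m + s))
        - ((a-1) * Real.log (m + s) + (b-1) * Real.log (1 - m - s)) with hgdef
    have hbounds : ∀ s, 0 ≤ s → s < m → 0 < m - s ∧ 0 < m + s ∧ 0 < 1 - m + s ∧ 0 < 1 - m - s :=
      fun s hh0 hh1 => ⟨by linarith, by linarith, by linarith, by linarith⟩
    have hg0 : g 0 = 0 := by
      simp [hgdef]
    -- sign transfer : ψ s₂ < 0 gives g s₂ < 0
    have hgs₂ : g s₂ < 0 := by
      obtain ⟨k1, k2, k3, k4⟩ := hbounds s₂ hs₂0.le (lt_trans hs₂t htm')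
      have hiff := betaF_lt_iff (a := a) (b := b) (x := m - s₂) (y := m + s₂)
        k1 (by linarith) k2 (by linarith)
      have hlt : betaF a b (m - s₂) < betaF a b (m + s₂) := by
        have : ψ s₂ = betaF a b (m - s₂) - betaF a b (m + s₂) := rfl
        linarith [this ▸ hs₂]
      have := hiff.mp hlt
      rw [show 1 - (m - s₂) = 1 - m + s₂ by ring, show 1 - (m + s₂) = 1 - m - s₂ by ring] at this
      show ((a-1) * Real.log (m - s₂) + (b-1) * Real.log (1 - m + s₂))
        - ((a-1) * Real.log (m + s₂) + (b-1) * Real.log (1 - m - s₂)) < 0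
      linarith
    -- sign transfer : 0 < ψ t gives 0 < g t
    have hgt : 0 < g t := by
      obtain ⟨k1, k2, k3, k4⟩ := hbounds t ht0.le htm'
      have hiff := betaF_lt_iff (a := a) (b := b) (x := m + t) (y := m - t)
        k2 (by linarith) k1 (by linarith)
      have hlt : betaF a b (m + t) < betaF a b (m - t) := by
        have : ψ t = betaF a b (m - t) - betaF a b (m + t) := rfl
        linarith [this ▸ hpos']
      have := hiff.mp hlt
      rw [show 1 - (m - t) = 1 - m + t by ring, show 1 - (m + t) = 1 - m - t by ring] at this
      show 0 < ((a-1) * Real.log (m - t) + (b-1) * Real.log (1 - m + t))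
        - ((a-1) * Real.log (m + t) + (b-1) * Real.log (1 - m - t))
      linarith
    -- continuity of g on [0, t]
    have hgcont : ContinuousOn g (Set.Icc 0 t) := by
      have hb1 : ∀ s ∈ Set.Icc (0:ℝ) t, 0 < m - s ∧ 0 < m + s ∧ 0 < 1 - m + s ∧ 0 < 1 - m - s :=
        fun s hs => hbounds s hs.1 (lt_of_le_of_lt hs.2 htm')
      apply ContinuousOn.sub <;> apply ContinuousOn.add <;> apply ContinuousOn.mul <;>
        try exact continuousOn_const
      · exact ContinuousOn.log (by fun_prop) (fun s hs => ne_of_gt (hb1 s hs).1)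
      · exact ContinuousOn.log (by fun_prop) (fun s hs => ne_of_gt (hb1 s hs).2.2.1)
      · exact ContinuousOn.log (by fun_prop) (fun s hs => ne_of_gt (hb1 s hs).2.1)
      · exact ContinuousOn.log (by fun_prop) (fun s hs => ne_of_gt (hb1 s hs).2.2.2)
    have hgderiv : ∀ s ∈ Set.Ioo (0:ℝ) t, HasDerivAt g (DgF a b m s) s := by
      intro s hs
      obtain ⟨k1, k2, k3, k4⟩ := hbounds s hs.1.le (lt_trans hs.2 htm')
      exact logdiff_hasDeriv k1 k2 k3 k4
    -- mean value theorem on [0, s₂] and [s₂, t]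
    obtain ⟨ξ₁, hξ₁mem, hξ₁⟩ := exists_hasDerivAt_eq_slope g (DgF a b m) hs₂0
      (hgcont.mono (Set.Icc_subset_Icc_right hs₂t.le))
      (fun s hs => hgderiv s ⟨hs.1, lt_trans hs.2 hs₂t⟩)
    obtain ⟨ξ₂, hξ₂mem, hξ₂⟩ := exists_hasDerivAt_eq_slope g (DgF a b m) hs₂t
      (hgcont.mono (Set.Icc_subset_Icc_left hs₂0.le))
      (fun s hs => hgderiv s ⟨lt_trans hs₂0 hs.1, hs.2⟩)
    have hD1 : DgF a b m ξ₁ < 0 := by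
      rw [hξ₁, hg0]
      apply div_neg_of_neg_of_pos <;> linarith
    have hD2 : 0 < DgF a b m ξ₂ := by
      rw [hξ₂]
      apply div_pos <;> linarith
    exact Dg_no_sign_return ha hab hm2 hξ₁mem.1 (lt_trans hξ₁mem.2 hξ₂mem.1)
      (lt_trans hξ₂mem.2 htm') hD1 hD2
  -- assemble
  refine ⟨c, ⟨hc0, hcm⟩, fun t ht => ?_⟩
  rcases lt_trichotomy t c with h | h | h
  · have h1 : 0 ≤ ψ t := hpos t ht.1 h.le
    have h2 : t - c ≤ 0 := by linarith
    exact mul_nonpos_of_nonpos_of_nonneg h2 h1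
  · rw [h, sub_self]
    simp
  · have h1 : ψ t ≤ 0 := hneg2 t h ht.2
    have h2 : 0 ≤ t - c := by linarith
    exact mul_nonpos_of_nonneg_of_nonpos h2 h1

/-- case 2 main lemma -/
lemma case2 (ha : 1 < a) (hab : a < b) {m : ℝ} (hm0 : 0 ≤ m) (hm1 : m ≤ 1)
    (hmed : ∫ x in (0:ℝ)..m, betaF a b x = (1/2) * ∫ x in (0:ℝ)..1, betaF a b x) :
    m ≤ a / (a + b) := by
  have hb : 1 < b := ha.trans hab
  have hT : 0 < ∫ x in (0:ℝ)..1, betaF a b x := intF_pos ha hb (le_refl 0) one_pos (le_refl 1)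
  have hm0' : 0 < m := by
    rcases eq_or_lt_of_le hm0 with h | h
    · exfalso
      rw [← h, intervalIntegral.integral_same] at hmed
      linarith
    · exact h
  have hm2 : m ≤ 1/2 := med_le_half ha hab hm1 hmed
  obtain ⟨c, hcmem, hcross⟩ := single_crossing ha hab hm0' hm2
  obtain ⟨hc0, hcm⟩ := hcmem
  have hFi : ∀ u v : ℝ, IntervalIntegrable (betaF a b) MeasureTheory.volume u v :=
    betaF_intble ha hb
  have hGcont : Continuous (fun x => betaF a b x * (x - m)) :=
    (betaF_cont ha hb).mul (by fun_prop)
  have hc1 : Continuous fun t : ℝ => betaF a b (m - t) :=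
    (betaF_cont ha hb).comp (continuous_const.sub continuous_id)
  have hc2 : Continuous fun t : ℝ => betaF a b (m + t) :=
    (betaF_cont ha hb).comp (continuous_const.add continuous_id)
  -- substitution identities
  have hsub1 : ∫ t in (0:ℝ)..m, betaF a b (m - t) * (m - t - m)
      = ∫ x in (0:ℝ)..m, betaF a b x * (x - m) := by
    have h := intervalIntegral.integral_comp_sub_left (fun x => betaF a b x * (x - m)) m
      (a := 0) (b := m)
    simp only [sub_zero, sub_self] at h
    exact h
  have hsub2 : ∫ t in (0:ℝ)..m, betaF a b (m + t) * (m + t - m)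
      = ∫ x in m..(2*m), betaF a b x * (x - m) := by
    have h := intervalIntegral.integral_comp_add_left (fun x => betaF a b x * (x - m)) m
      (a := 0) (b := m)
    simp only [add_zero] at h
    rw [h]
    congr 1
    ring
  have hsubA : ∫ t in (0:ℝ)..m, betaF a b (m - t) = ∫ x in (0:ℝ)..m, betaF a b x := by
    have h := intervalIntegral.integral_comp_sub_left (betaF a b) m (a := 0) (b := m)
    simp only [sub_zero, sub_self] at h
    exact h
  have hsubB : ∫ t in (0:ℝ)..m, betaF a b (m + t) = ∫ x in m..(2*m), betaF a b x := by
    have h := intervalIntegral.integral_comp_add_left (betaF a b) m (a := 0) (b := m)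
    simp only [add_zero] at h
    rw [h]
    congr 1
    ring
  -- lower bound for the inner part
  have hmono1 : (∫ t in (0:ℝ)..m, c * (betaF a b (m + t) - betaF a b (m - t)))
      ≤ ∫ t in (0:ℝ)..m, (betaF a b (m - t) * (m - t - m) + betaF a b (m + t) * (m + t - m)) := by
    apply intervalIntegral.integral_mono_on hm0'.le
    · exact (continuous_const.mul (hc2.sub hc1)).intervalIntegrable _ _
    · exact ((hc1.mul (by fun_prop)).add (hc2.mul (by fun_prop))).intervalIntegrable _ _
    · intro t ht
      nlinarith [hcross t ht]
  have hcombL : (∫ t in (0:ℝ)..m, c * (betaF a b (m + t) - betaF a b (m - t)))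
      = c * ((∫ x in m..(2*m), betaF a b x) - ∫ x in (0:ℝ)..m, betaF a b x) := by
    rw [intervalIntegral.integral_const_mul,
      intervalIntegral.integral_sub (hc2.intervalIntegrable _ _) (hc1.intervalIntegrable _ _),
      hsubA, hsubB]
  have hcombR : (∫ t in (0:ℝ)..m, (betaF a b (m - t) * (m - t - m) + betaF a b (m + t) * (m + t - m)))
      = (∫ x in (0:ℝ)..m, betaF a b x * (x - m)) + ∫ x in m..(2*m), betaF a b x * (x - m) := by
    rw [intervalIntegral.integral_add (f := fun t => betaF a b (m - t) * (m - t - m))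
      (g := fun t => betaF a b (m + t) * (m + t - m))
      ((hc1.mul (by fun_prop : Continuous fun t : ℝ => m - t - m)).intervalIntegrable _ _)
      ((hc2.mul (by fun_prop : Continuous fun t : ℝ => m + t - m)).intervalIntegrable _ _), hsub1, hsub2]
  -- lower bound for the outer part
  have hmono2 : (∫ x in (2*m)..1, c * betaF a b x)
      ≤ ∫ x in (2*m)..1, betaF a b x * (x - m) := by
    apply intervalIntegral.integral_mono_on (by linarith)
    · exact (continuous_const.mul (betaF_cont ha hb)).intervalIntegrable _ _
    · exact hGcont.intervalIntegrable _ _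
    · intro x hx
      have hfx : 0 ≤ betaF a b x := betaF_nonneg (by linarith [hx.1]) hx.2
      nlinarith [mul_nonneg (show (0:ℝ) ≤ x - m - c by linarith [hx.1]) hfx]
  have hmono2' : (∫ x in (2*m)..1, c * betaF a b x)
      = c * ∫ x in (2*m)..1, betaF a b x := intervalIntegral.integral_const_mul _ _
  -- splitting identities
  have hs1 : (∫ x in (0:ℝ)..m, betaF a b x) + ∫ x in m..(2*m), betaF a b x
      = ∫ x in (0:ℝ)..(2*m), betaF a b x :=
    integral_add_adjacent_intervals (hFi 0 m) (hFi m (2*m))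
  have hs2 : (∫ x in (0:ℝ)..(2*m), betaF a b x) + ∫ x in (2*m)..1, betaF a b x
      = ∫ x in (0:ℝ)..1, betaF a b x :=
    integral_add_adjacent_intervals (hFi 0 (2*m)) (hFi (2*m) 1)
  have hGs1 : (∫ x in (0:ℝ)..m, betaF a b x * (x - m)) + ∫ x in m..(2*m), betaF a b x * (x - m)
      = ∫ x in (0:ℝ)..(2*m), betaF a b x * (x - m) :=
    integral_add_adjacent_intervals (hGcont.intervalIntegrable _ _) (hGcont.intervalIntegrable _ _)
  have hGs2 : (∫ x in (0:ℝ)..(2*m), betaF a b x * (x - m)) + ∫ x in (2*m)..1, betaF a b x * (x - m)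
      = ∫ x in (0:ℝ)..1, betaF a b x * (x - m) :=
    integral_add_adjacent_intervals (hGcont.intervalIntegrable _ _) (hGcont.intervalIntegrable _ _)
  -- the moment identity at c = 1
  have hmom0 : ∫ x in (0:ℝ)..1, betaF a b x * (a - (a+b)*x) = 0 := by
    have h := moment_identity ha hb (c := 1) (by norm_num) (le_refl 1)
    rw [h, show (1:ℝ)-1 = 0 by ring, Real.one_rpow,
      Real.zero_rpow (by linarith : b ≠ 0), mul_zero]
  -- value of the full integral
  have hGval : ∫ x in (0:ℝ)..1, betaF a b x * (x - m)
      = (a/(a+b) - m) * ∫ x in (0:ℝ)..1, betaF a b x := by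
    have hpt : ∀ x, betaF a b x * (x - m)
        = (-(1/(a+b))) * (betaF a b x * (a - (a+b)*x)) + (a/(a+b) - m) * betaF a b x := by
      intro x
      have hab0 : a + b ≠ 0 := by positivity
      field_simp
      ring
    rw [intervalIntegral.integral_congr (g := fun x =>
        (-(1/(a+b))) * (betaF a b x * (a - (a+b)*x)) + (a/(a+b) - m) * betaF a b x)
      (fun x _ => hpt x)]
    rw [intervalIntegral.integral_add (f := fun x => (-(1/(a+b))) * (betaF a b x * (a - (a+b)*x)))
      (g := fun x => (a/(a+b) - m) * betaF a b x)
      ((((betaF_cont ha hb).mul (by fun_prop : Continuous fun x : ℝ => a - (a+b)*x)).intervalIntegrable _ _).const_mul _)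
      ((hFi 0 1).const_mul _),
      intervalIntegral.integral_const_mul, intervalIntegral.integral_const_mul, hmom0]
    ring
  -- conclude
  have hfinal : 0 ≤ (a/(a+b) - m) * ∫ x in (0:ℝ)..1, betaF a b x := by
    rw [← hGval, ← hGs2, ← hGs1]
    have e1 : c * ((∫ x in m..(2*m), betaF a b x) - ∫ x in (0:ℝ)..m, betaF a b x)
        ≤ (∫ x in (0:ℝ)..m, betaF a b x * (x - m)) + ∫ x in m..(2*m), betaF a b x * (x - m) := by
      rw [← hcombL, ← hcombR]
      exact hmono1
    have e2 : c * ∫ x in (2*m)..1, betaF a b x ≤ ∫ x in (2*m)..1, betaF a b x * (x - m) := by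
      rw [← hmono2']
      exact hmono2
    nlinarith [e1, e2, hmed, hs1, hs2]
  by_contra hlt
  push_neg at hlt
  have hneg : (a/(a+b) - m) * ∫ x in (0:ℝ)..1, betaF a b x < 0 :=
    mul_neg_of_neg_of_pos (by linarith) hT
  linarith

end aux

/-- Median bounds for a Beta(a,b) random variable, where a median is any m ∈ [0,1]
with P[X ≤ m] = 1/2, expressed via the unnormalized beta density. -/
theorem stmt_4 (a b m : ℝ) (hm0 : 0 ≤ m) (hm1 : m ≤ 1)
    (hmed : ∫ x in (0:ℝ)..m, x ^ (a - 1) * (1 - x) ^ (b - 1)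
      = (1 / 2) * ∫ x in (0:ℝ)..1, x ^ (a - 1) * (1 - x) ^ (b - 1)) :
    ((1 < b ∧ b < a) → m ≤ (a - 1) / (a + b - 2)) ∧
    ((1 < a ∧ a < b) → m ≤ a / (a + b)) ∧
    ((a = b ∧ 1 < a) → m = 1 / 2) := by
  have hmed' : ∫ x in (0:ℝ)..m, betaF a b x = (1/2) * ∫ x in (0:ℝ)..1, betaF a b x := by
    simpa [betaF] using hmed
  refine ⟨?_, ?_, ?_⟩
  · rintro ⟨hb, hba⟩
    have ha : 1 < a := hb.trans hba
    exact median_le ha hb hm1 (div_nonneg (by linarith) (by linarith)) hmed' (case1_half ha hb hba)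
  · rintro ⟨ha, hab⟩
    exact case2 ha hab hm0 hm1 hmed'
  · rintro ⟨rfl, ha⟩
    refine le_antisymm ?_ ?_
    · exact median_le ha ha hm1 (by norm_num) hmed' (le_of_eq (half_symm ha).symm)
    · exact median_ge ha ha hm0 (by norm_num) hmed' (le_of_eq (half_symm ha))
end

section
/- Fix a, b > 1 and k', with k' ≥ 1 an integer. Then there exists w ≥ (b−1)/(k'·(a+b)) such that 1 − w·k'/(1+w) ≥ median(Beta(a,b)). -/
open Real Set intervalIntegral

lemma aux_phi (a b t : ℝ) (ha : 1 < a) (hb : 1 < b) (ht0 : 0 < t) (ht1 : t < 1)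
    (hat : a * (1 - t) ≤ (b - 1) * t) :
    ∀ x, t ≤ x → x < 1 →
      0 ≤ 2*a*(Real.log t - Real.log x)
          + (b-1)*(Real.log (x - t^2) - Real.log x - Real.log (1-x)) := by
  set φ : ℝ → ℝ := fun y => 2*a*(Real.log t - Real.log y)
      + (b-1)*(Real.log (y - t^2) - Real.log y - Real.log (1-y)) with hφ
  have ht2 : t^2 < t := by nlinarith
  have hD : ∀ x, t < x → x < 1 → HasDerivAt φ
      (2*a*(0 - 1/x) + (b-1)*(1/(x - t^2) - 1/x - (-1)/(1-x))) x := by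
    intro x hx1 hx2
    have hx0 : 0 < x := lt_trans ht0 hx1
    have hxt2 : 0 < x - t^2 := by nlinarith
    have h1x : 0 < 1 - x := by linarith
    have d1 : HasDerivAt (fun y : ℝ => Real.log (y - t^2)) (1/(x - t^2)) x := by
      simpa using (HasDerivAt.log ((hasDerivAt_id x).sub_const (t^2)) (ne_of_gt hxt2))
    have d2 : HasDerivAt (fun y : ℝ => Real.log y) (1/x) x := by
      simpa [one_div] using Real.hasDerivAt_log (ne_of_gt hx0)
    have d3 : HasDerivAt (fun y : ℝ => Real.log (1 - y)) ((-1)/(1-x)) x := by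
      simpa using (HasDerivAt.log ((hasDerivAt_id x).const_sub 1) (ne_of_gt h1x))
    exact (((hasDerivAt_const x (Real.log t)).sub d2).const_mul (2*a)).add
      (((d1.sub d2).sub d3).const_mul (b-1))
  have hmono : MonotoneOn φ (Ico t 1) := by
    apply monotoneOn_of_deriv_nonneg (convex_Ico t 1)
    · apply ContinuousOn.add
      · apply ContinuousOn.mul continuousOn_const
        apply ContinuousOn.sub continuousOn_const
        apply ContinuousOn.log continuousOn_id
        intro y hy; rcases hy with ⟨hy1, hy2⟩
        simp only [id]; intro h; nlinarith
      · apply ContinuousOn.mul continuousOn_const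
        apply ContinuousOn.sub
        apply ContinuousOn.sub
        · apply ContinuousOn.log (by fun_prop)
          intro y hy; rcases hy with ⟨hy1, hy2⟩; nlinarith
        · apply ContinuousOn.log continuousOn_id
          intro y hy; rcases hy with ⟨hy1, hy2⟩
          simp only [id]; intro h; nlinarith
        · apply ContinuousOn.log (by fun_prop)
          intro y hy; rcases hy with ⟨hy1, hy2⟩; intro h; nlinarith
    · rw [interior_Ico]
      intro x hx
      exact ((hD x hx.1 hx.2).differentiableAt).differentiableWithinAt
    · rw [interior_Ico]
      intro x hx
      rcases hx with ⟨hx1, hx2⟩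
      have hx0 : 0 < x := lt_trans ht0 hx1
      have hxt2 : 0 < x - t^2 := by nlinarith
      have h1x : 0 < 1 - x := by linarith
      rw [(hD x hx1 hx2).deriv]
      have e2 : 2*(a*(1-t)) * ((x - t^2)*(1-x)) ≤ 2*((b-1)*t) * ((x - t^2)*(1-x)) := by
        have h : (0:ℝ) ≤ (x - t^2)*(1-x) := by positivity
        nlinarith [mul_le_mul_of_nonneg_right hat h]
      have e3 : 2*((b-1)*t) * ((x - t^2)*(1-x)) ≤ (b-1)*((1-t)*(t^2*(1-x) + x*(x - t^2))) := by
        nlinarith [mul_nonneg (mul_nonneg (by linarith : (0:ℝ) ≤ b - 1)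
          (by linarith : (0:ℝ) ≤ 1 + t)) (sq_nonneg (x - t))]
      have key : 2*a*((x - t^2)*(1-x)) ≤ (b-1)*(t^2*(1-x) + x*(x - t^2)) := by
        have h4 : (1-t) * (2*a*((x - t^2)*(1-x))) ≤ (1-t) * ((b-1)*(t^2*(1-x) + x*(x - t^2))) := by
          nlinarith [e2, e3]
        exact le_of_mul_le_mul_left h4 (by linarith)
      have hfrac : 1/(x - t^2) - 1/x - (-1)/(1-x)
          = (t^2*(1-x) + x*(x - t^2)) / (x*((x - t^2)*(1-x))) := by
        field_simp
        ring
      rw [hfrac]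
      have heq : 2*a*(0 - 1/x) + (b-1)*((t^2*(1-x) + x*(x - t^2)) / (x*((x - t^2)*(1-x))))
          = ((b-1)*(t^2*(1-x) + x*(x - t^2)) - 2*a*((x - t^2)*(1-x))) / (x*((x - t^2)*(1-x))) := by
        field_simp
        ring
      rw [heq]
      exact div_nonneg (by linarith) (by positivity)
  intro x hx1 hx2
  have hφt : φ t = 0 := by
    have h1 : t - t^2 = t * (1 - t) := by ring
    simp only [hφ, h1, Real.log_mul (ne_of_gt ht0) (by linarith : (1:ℝ) - t ≠ 0)]
    ring
  have := hmono (left_mem_Ico.2 ht1) ⟨hx1, hx2⟩ hx1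
  rw [hφt] at this
  exact this
lemma aux_point (a b t : ℝ) (ha : 1 < a) (hb : 1 < b) (ht0 : 0 < t) (ht1 : t < 1)
    (hat : a * (1 - t) ≤ (b - 1) * t) :
    ∀ x ∈ Set.Icc t 1,
      x ^ (a-1) * (1-x) ^ (b-1) ≤ t^2/x^2 * ((t^2/x) ^ (a-1) * (1 - t^2/x) ^ (b-1)) := by
  intro x hx
  rcases hx with ⟨hx1, hx2⟩
  have hx0 : 0 < x := lt_of_lt_of_le ht0 hx1
  rcases eq_or_lt_of_le hx2 with h1 | h1
  · -- x = 1
    subst h1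
    have : ((1:ℝ) - 1) ^ (b-1) = 0 := by
      rw [sub_self, Real.zero_rpow (ne_of_gt (by linarith : (0:ℝ) < b - 1))]
    rw [this, mul_zero]
    have ht2 : t^2 ≤ 1 := by nlinarith
    exact mul_nonneg (by positivity) (mul_nonneg (Real.rpow_nonneg (by positivity) _)
      (Real.rpow_nonneg (by rw [div_one]; nlinarith) _))
  · -- x < 1
    have hxt2 : 0 < x - t^2 := by nlinarith
    have h1x : 0 < 1 - x := by linarith
    have htx : 0 < t^2/x := by positivity
    have h1tx : 1 - t^2/x = (x - t^2)/x := by field_simp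
    have h1tx' : 0 < 1 - t^2/x := by rw [h1tx]; positivity
    have hphi := aux_phi a b t ha hb ht0 ht1 hat x hx1 h1
    have htt : 0 < t^2/x^2 := by positivity
    rw [Real.rpow_def_of_pos hx0, Real.rpow_def_of_pos h1x, Real.rpow_def_of_pos htx,
      Real.rpow_def_of_pos h1tx', ← Real.exp_log htt, ← Real.exp_add, ← Real.exp_add,
      ← Real.exp_add, Real.exp_le_exp]
    have l1 : Real.log (t^2/x^2) = 2*Real.log t - 2*Real.log x := by
      rw [Real.log_div (by positivity) (by positivity), Real.log_pow, Real.log_pow]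
      push_cast; ring
    have l2 : Real.log (t^2/x) = 2*Real.log t - Real.log x := by
      rw [Real.log_div (by positivity) (ne_of_gt hx0), Real.log_pow]
      push_cast; ring
    have l3 : Real.log (1 - t^2/x) = Real.log (x - t^2) - Real.log x := by
      rw [h1tx, Real.log_div (ne_of_gt hxt2) (ne_of_gt hx0)]
    rw [l1, l2, l3]
    nlinarith [hphi]

/-- For a, b > 1 and an integer k' ≥ 1, there exists w ≥ (b−1)/(k'·(a+b)) with
1 − w·k'/(1+w) ≥ median(Beta(a,b)), the median being any m ∈ [0,1] with
P[X ≤ m] = 1/2 for the Beta(a,b) distribution. -/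
theorem stmt_5 (a b : ℝ) (ha : 1 < a) (hb : 1 < b) (k' : ℕ) (hk' : 1 ≤ k')
    (m : ℝ) (hm0 : 0 ≤ m) (hm1 : m ≤ 1)
    (hmed : ∫ x in (0:ℝ)..m, x ^ (a - 1) * (1 - x) ^ (b - 1)
      = (1 / 2) * ∫ x in (0:ℝ)..1, x ^ (a - 1) * (1 - x) ^ (b - 1)) :
    ∃ w : ℝ, (b - 1) / ((k' : ℝ) * (a + b)) ≤ w ∧
      m ≤ 1 - w * (k' : ℝ) / (1 + w) := by
  set g : ℝ → ℝ := fun x => x ^ (a - 1) * (1 - x) ^ (b - 1) with hgdef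
  set t : ℝ := (a + 1) / (a + b) with htdef
  have hab : 0 < a + b := by linarith
  have ht0 : 0 < t := by positivity
  have ht1 : t < 1 := by rw [htdef, div_lt_one hab]; linarith
  have ht2 : t ^ 2 < t := by nlinarith
  have hat : a * (1 - t) ≤ (b - 1) * t := by
    have h1t : 1 - t = (b - 1) / (a + b) := by rw [htdef]; field_simp; ring
    rw [h1t, htdef, ← mul_div_assoc, ← mul_div_assoc, div_le_div_iff₀ hab hab]
    nlinarith
  -- continuity and integrability of g
  have hg : Continuous g := by
    have h1 : Continuous fun x : ℝ => x ^ (a - 1) := by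
      rw [continuous_iff_continuousAt]
      intro x
      exact Real.continuousAt_rpow_const x _ (Or.inr (by linarith))
    have h2 : Continuous fun x : ℝ => (1 - x) ^ (b - 1) := by
      rw [continuous_iff_continuousAt]
      intro x
      exact (Real.continuousAt_rpow_const (1 - x) _ (Or.inr (by linarith))).comp
        (by fun_prop)
    exact h1.mul h2
  have hgi : ∀ u v : ℝ, IntervalIntegrable g MeasureTheory.volume u v :=
    fun u v => hg.intervalIntegrable u v
  have hgnn : ∀ x : ℝ, 0 ≤ x → x ≤ 1 → 0 ≤ g x := fun x h1 h2 =>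
    mul_nonneg (Real.rpow_nonneg h1 _) (Real.rpow_nonneg (by linarith) _)
  -- the comparison function
  set F : ℝ → ℝ := fun x => t ^ 2 / x ^ 2 * g (t ^ 2 / x) with hFdef
  have hFc : ContinuousOn F (Set.Icc t 1) := by
    apply ContinuousOn.mul
    · exact continuousOn_const.div (by fun_prop)
        (fun x hx => by have := lt_of_lt_of_le ht0 hx.1; positivity)
    · exact hg.comp_continuousOn (continuousOn_const.div continuousOn_id
        (fun x hx => ne_of_gt (lt_of_lt_of_le ht0 hx.1)))
  have hFi : IntervalIntegrable F MeasureTheory.volume t 1 :=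
    ContinuousOn.intervalIntegrable (by rwa [Set.uIcc_of_le ht1.le])
  -- step 1: pointwise comparison
  have step1 : (∫ x in t..1, g x) ≤ ∫ x in t..1, F x :=
    intervalIntegral.integral_mono_on ht1.le (hgi t 1) hFi
      (aux_point a b t ha hb ht0 ht1 hat)
  -- step 2: substitution
  have step2 : (∫ x in t..1, F x) = ∫ y in (t ^ 2)..t, g y := by
    have hderiv : ∀ x ∈ Set.uIcc t 1, HasDerivAt (fun y => t ^ 2 / y) (-(t ^ 2 / x ^ 2)) x := by
      intro x hx
      rw [Set.uIcc_of_le ht1.le] at hx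
      have hx0 : 0 < x := lt_of_lt_of_le ht0 hx.1
      have := (hasDerivAt_inv (ne_of_gt hx0)).const_mul (t ^ 2)
      simpa [div_eq_mul_inv, mul_neg] using this
    have hc' : ContinuousOn (fun x : ℝ => -(t ^ 2 / x ^ 2)) (Set.uIcc t 1) := by
      rw [Set.uIcc_of_le ht1.le]
      exact (continuousOn_const.div (by fun_prop)
        (fun x hx => by have := lt_of_lt_of_le ht0 hx.1; positivity)).neg
    have hsub := intervalIntegral.integral_comp_smul_deriv hderiv hc' hg
    simp only [smul_eq_mul, Function.comp] at hsub
    have e1 : t ^ 2 / t = t := by rw [sq, mul_div_assoc, div_self (ne_of_gt ht0), mul_one]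
    have e2 : t ^ 2 / 1 = t ^ 2 := div_one _
    rw [e1, e2] at hsub
    have e3 : (∫ x in t..1, -(t ^ 2 / x ^ 2) * g (t ^ 2 / x)) = -∫ x in t..1, F x := by
      rw [← intervalIntegral.integral_neg]
      congr 1
      funext x
      simp [hFdef]
    rw [e3] at hsub
    have h4 : (∫ x in t..(t ^ 2), g x) = -∫ x in (t ^ 2)..t, g x :=
      intervalIntegral.integral_symm _ _
    linarith [hsub, h4]
  -- step 3
  have step3 : (∫ y in (t ^ 2)..t, g y) ≤ ∫ y in (0:ℝ)..t, g y := by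
    have hsplit : (∫ y in (0:ℝ)..t ^ 2, g y) + ∫ y in (t ^ 2)..t, g y = ∫ y in (0:ℝ)..t, g y :=
      intervalIntegral.integral_add_adjacent_intervals (hgi _ _) (hgi _ _)
    have hnn : 0 ≤ ∫ y in (0:ℝ)..t ^ 2, g y :=
      intervalIntegral.integral_nonneg (by positivity)
        (fun u hu => hgnn u hu.1 (le_trans hu.2 (by nlinarith)))
    linarith
  have key : (∫ x in t..1, g x) ≤ ∫ x in (0:ℝ)..t, g x := by linarith
  -- median manipulation
  have htot : (∫ x in (0:ℝ)..m, g x) + ∫ x in m..1, g x = ∫ x in (0:ℝ)..1, g x :=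
    intervalIntegral.integral_add_adjacent_intervals (hgi _ _) (hgi _ _)
  have hmed' : (∫ x in (0:ℝ)..m, g x) = (1 / 2) * ∫ x in (0:ℝ)..1, g x := hmed
  have hhalf : (∫ x in m..1, g x) = ∫ x in (0:ℝ)..m, g x := by linarith
  have hmt : m ≤ t := by
    by_contra h
    push_neg at h
    have h1 : (∫ x in (0:ℝ)..t, g x) + ∫ x in t..m, g x = ∫ x in (0:ℝ)..m, g x :=
      intervalIntegral.integral_add_adjacent_intervals (hgi _ _) (hgi _ _)
    have h2 : (∫ x in t..m, g x) + ∫ x in m..1, g x = ∫ x in t..1, g x :=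
      intervalIntegral.integral_add_adjacent_intervals (hgi _ _) (hgi _ _)
    have hpos : 0 < ∫ x in t..m, g x := by
      apply intervalIntegral.intervalIntegral_pos_of_pos_on (hgi t m) _ h
      intro x hx
      have hx0 : 0 < x := lt_trans ht0 hx.1
      have hx1 : x < 1 := lt_of_lt_of_le hx.2 hm1
      exact mul_pos (Real.rpow_pos_of_pos hx0 _) (Real.rpow_pos_of_pos (by linarith) _)
    linarith
  -- conclusion
  have hk1 : (1:ℝ) ≤ (k' : ℝ) := by exact_mod_cast hk'
  have hkpos : (0:ℝ) < (k' : ℝ) := by linarith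
  refine ⟨(b - 1) / ((k' : ℝ) * (a + b)), le_refl _, ?_⟩
  set w : ℝ := (b - 1) / ((k' : ℝ) * (a + b)) with hwdef
  have hw0 : 0 < w := div_pos (by linarith) (by positivity)
  have hwk : w * (k' : ℝ) = (b - 1) / (a + b) := by
    rw [hwdef]
    field_simp
  have hdiv : w * (k' : ℝ) / (1 + w) ≤ w * (k' : ℝ) :=
    div_le_self (by positivity) (by linarith)
  have ht_eq : t = 1 - (b - 1) / (a + b) := by
    rw [htdef]
    field_simp
    ring
  linarith [hdiv, hmt]
end
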